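/- Let T be a nondegenerate triangle in ℝ² with barycentric coordinates λ₁, λ₂, λ₃, and define φ = 2 − 3(λ₁² + λ₂² + λ₃²). Then for every edge F of T and every affine function q on F, the integral of φ·q over F is zero. -/

import Mathlib

/-- The Fortin–Soulie bubble `φ = 2 − 3(λ₁² + λ₂² + λ₃²)` of a nondegenerate triangle is
`L²`-orthogonal to affine functions on each edge of the triangle. -/
theorem stmt_9 (S : Fin 3 → EuclideanSpace ℝ (Fin 2)) (hS : AffineIndependent ℝ S)
    (lam : Fin 3 → (EuclideanSpace ℝ (Fin 2) →ᵃ[ℝ] ℝ))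
    (hlam : ∀ i j : Fin 3, lam i (S j) = if i = j then 1 else 0)
    (φ : EuclideanSpace ℝ (Fin 2) → ℝ)
    (hφ : φ = fun x => 2 - 3 * ∑ k, (lam k x) ^ 2)
    (q : EuclideanSpace ℝ (Fin 2) →ᵃ[ℝ] ℝ) :
    ∀ i j : Fin 3, i ≠ j →
      ∫ t in (0:ℝ)..1,
        φ ((1 - t) • S i + t • S j) * q ((1 - t) • S i + t • S j) * ‖S j - S i‖ = 0 := by
  intro i j hij
  -- every affine map is affine along the segment
  have haff : ∀ (f : EuclideanSpace ℝ (Fin 2) →ᵃ[ℝ] ℝ) (t : ℝ),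
      f ((1 - t) • S i + t • S j) = (1 - t) * f (S i) + t * f (S j) := by
    intro f t
    rw [← AffineMap.lineMap_apply_module, AffineMap.apply_lineMap,
      AffineMap.lineMap_apply_module]
    simp [smul_eq_mul]
  -- the sum of squared barycentric coordinates on the edge
  have hsum : ∀ t : ℝ, ∑ k, (lam k ((1 - t) • S i + t • S j)) ^ 2 = (1 - t) ^ 2 + t ^ 2 := by
    intro t
    simp only [haff, Fin.sum_univ_three]
    fin_cases i <;> fin_cases j <;> simp_all [hlam] <;> ring
  set a := q (S i) with ha
  set b := q (S j) with hb
  set C := ‖S j - S i‖ with hC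
  have hg : (fun t : ℝ => φ ((1 - t) • S i + t • S j) * q ((1 - t) • S i + t • S j) * C)
      = fun t : ℝ => (2 - 3 * ((1 - t) ^ 2 + t ^ 2)) * ((1 - t) * a + t * b) * C := by
    funext t
    rw [hφ]
    simp only [hsum t, haff q t]
    rfl
  rw [hg]
  -- explicit antiderivative
  set F : ℝ → ℝ := fun t =>
    (((6 * a - 6 * b) / 4) * C) * t ^ 4 + (((6 * b - 12 * a) / 3) * C) * t ^ 3
      + (((7 * a - b) / 2) * C) * t ^ 2 + (-a * C) * t with hF
  have hderiv : ∀ t ∈ Set.uIcc (0 : ℝ) 1,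
      HasDerivAt F ((2 - 3 * ((1 - t) ^ 2 + t ^ 2)) * ((1 - t) * a + t * b) * C) t := by
    intro t _
    have h : HasDerivAt F
        ((((6 * a - 6 * b) / 4) * C) * (↑(4:ℕ) * t ^ 3) + (((6 * b - 12 * a) / 3) * C) * (↑(3:ℕ) * t ^ 2)
          + (((7 * a - b) / 2) * C) * (↑(2:ℕ) * t ^ 1) + (-a * C) * 1) t := by
      exact ((((hasDerivAt_pow 4 t).const_mul _).add
        ((hasDerivAt_pow 3 t).const_mul _)).add
        ((hasDerivAt_pow 2 t).const_mul _)).add ((hasDerivAt_id t).const_mul _)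
    convert h using 1
    push_cast
    ring
  have hint : IntervalIntegrable
      (fun t : ℝ => (2 - 3 * ((1 - t) ^ 2 + t ^ 2)) * ((1 - t) * a + t * b) * C)
      MeasureTheory.volume 0 1 := by
    apply Continuous.intervalIntegrable
    fun_prop
  rw [intervalIntegral.integral_eq_sub_of_hasDerivAt hderiv hint]
  simp only [hF]
  ring
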